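/- Let V be a finite nonempty type and R : V → V → Prop an irreflexive relation that is strongly connected, i.e., for all a, b : V, Relation.ReflTransGen R a b. Then R is word-representable: there exist ℓ ≥ 1 and a surjective word ω : Fin ℓ → V with E ω = R. -/

import Mathlib

/-- The edge relation of the word-graph of `ω`: ordered pairs of distinct adjacent letters. -/
def WordEdge {ℓ : ℕ} {α : Type*} (ω : Fin ℓ → α) (a b : α) : Prop :=
  a ≠ b ∧ ∃ i : ℕ, ∃ h : i + 1 < ℓ, ω ⟨i, Nat.lt_of_succ_lt h⟩ = a ∧ ω ⟨i + 1, h⟩ = b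

/-- Visit a list of edges, connecting them with paths. -/
noncomputable def visitE {V : Type*} (path : V → V → List V) : V → List (V × V) → List V
  | _, [] => []
  | c, (a, b) :: es => path c a ++ b :: visitE path b es

theorem myChain_append {V : Type*} {R : V → V → Prop} :
    ∀ {l₁ : List V} {a : V} {l₂ : List V},
    List.Chain R a l₁ → List.Chain R ((a :: l₁).getLast (List.cons_ne_nil _ _)) l₂ →
    List.Chain R a (l₁ ++ l₂)
  | [], a, l₂, _, h2 => h2
  | b :: l₁, a, l₂, h1, h2 => by
    rw [List.Chain, List.chain_cons] at h1
    rw [List.getLast_cons_cons] at h2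
    exact List.Chain.cons h1.1 (myChain_append h1.2 h2)

theorem visitE_chain {V : Type*} {R : V → V → Prop} {path : V → V → List V}
    (hch : ∀ a b, List.Chain R a (path a b))
    (hlast : ∀ a b, (a :: path a b).getLast (List.cons_ne_nil _ _) = b) :
    ∀ {es : List (V × V)} {c : V}, (∀ p ∈ es, R p.1 p.2) →
      List.Chain R c (visitE path c es)
  | [], _, _ => List.Chain.nil
  | (a, b) :: es, c, hR => by
    have h2 : List.Chain R a (b :: visitE path b es) :=
      List.Chain.cons (hR (a, b) List.mem_cons_self)
        (visitE_chain hch hlast fun p hp => hR p (List.mem_cons_of_mem _ hp))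
    rw [visitE]
    exact myChain_append (hch c a) (by rw [hlast]; exact h2)

theorem visitE_infix {V : Type*} {path : V → V → List V}
    (hlast : ∀ a b, (a :: path a b).getLast (List.cons_ne_nil _ _) = b) :
    ∀ {es : List (V × V)} {c : V}, ∀ p ∈ es, [p.1, p.2] <:+: c :: visitE path c es
  | (a, b) :: es, c, p, hp => by
    rw [visitE]
    rcases List.mem_cons.mp hp with h | hp
    · subst h
      refine ⟨(c :: path c a).dropLast, visitE path b es, ?_⟩
      show (c :: path c a).dropLast ++ [a, b] ++ visitE path b es
          = c :: (path c a ++ b :: visitE path b es)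
      have hd : (c :: path c a).dropLast ++ [a] = c :: path c a := by
        conv_rhs => rw [← List.dropLast_append_getLast (l := c :: path c a)
          (List.cons_ne_nil _ _), hlast]
      calc (c :: path c a).dropLast ++ [a, b] ++ visitE path b es
          = ((c :: path c a).dropLast ++ [a]) ++ (b :: visitE path b es) := by
            simp
        _ = c :: (path c a ++ b :: visitE path b es) := by rw [hd]; simp
    · have hsuf : (b :: visitE path b es) <:+ c :: (path c a ++ b :: visitE path b es) :=
        ⟨c :: path c a, by simp⟩
      exact (visitE_infix hlast p hp).trans hsuf.isInfix

/-- Every strongly connected irreflexive relation on a finite nonempty type is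
word-representable. -/
theorem strongly_connected_representable {V : Type*} [Fintype V] [Nonempty V]
    (R : V → V → Prop) (hirr : ∀ v, ¬ R v v)
    (hconn : ∀ a b : V, Relation.ReflTransGen R a b) :
    ∃ ℓ : ℕ, 1 ≤ ℓ ∧ ∃ ω : Fin ℓ → V, Function.Surjective ω ∧ WordEdge ω = R := by
  classical
  obtain ⟨v₀⟩ := ‹Nonempty V›
  by_cases hE : ∀ a b : V, ¬ R a b
  · -- R is empty, so V is a subsingleton
    have hsub : ∀ a b : V, a = b := fun a b =>
      ((Relation.reflTransGen_iff_eq (hE a)).mp (hconn a b)).symm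
    refine ⟨1, le_refl 1, fun _ => v₀, fun v => ⟨0, hsub v₀ v⟩, ?_⟩
    funext a b
    apply propext
    constructor
    · rintro ⟨_, i, hi, _⟩; omega
    · intro h; exact absurd h (by rw [hsub a b]; exact hirr b)
  · push_neg at hE
    obtain ⟨a₀, b₀, hab₀⟩ := hE
    -- choose paths
    have hpath : ∀ a b : V, ∃ l : List V,
        List.Chain R a l ∧ (a :: l).getLast (List.cons_ne_nil _ _) = b :=
      fun a b => List.exists_isChain_cons_of_relationReflTransGen (hconn a b)
    choose path hch hlast using hpath
    -- list of all edges
    set elist : List (V × V) := (Finset.univ.filter fun p : V × V => R p.1 p.2).toList with helist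
    have hmem : ∀ p : V × V, p ∈ elist ↔ R p.1 p.2 := by
      intro p; simp [helist]
    set L : List V := v₀ :: visitE path v₀ elist with hL
    have hchain : List.Chain R v₀ (visitE path v₀ elist) :=
      visitE_chain hch hlast (fun p hp => (hmem p).mp hp)
    have hchain' : List.Chain' R L := hchain
    -- every vertex has an outgoing edge
    have hout : ∀ v : V, ∃ w, R v w := by
      intro v
      obtain ⟨u, hu⟩ : ∃ u : V, u ≠ v := by
        rcases eq_or_ne a₀ v with rfl | h
        · exact ⟨b₀, fun h => hirr a₀ (h ▸ hab₀)⟩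
        · exact ⟨a₀, h⟩
      rcases (hconn v u).cases_head with rfl | ⟨c, hc, _⟩
      · exact absurd rfl hu
      · exact ⟨c, hc⟩
    -- each edge appears as an infix of L
    have hinf : ∀ a b : V, R a b → [a, b] <:+: L :=
      fun a b h => visitE_infix hlast (a, b) ((hmem (a, b)).mpr h)
    refine ⟨L.length, by simp [hL], fun i => L.get i, ?_, ?_⟩
    · -- surjective
      intro v
      obtain ⟨w, hw⟩ := hout v
      have hv : v ∈ L := (hinf v w hw).mem (by simp)
      obtain ⟨i, hi⟩ := List.mem_iff_get.mp hv
      exact ⟨i, hi⟩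
    · -- WordEdge = R
      funext a b
      apply propext
      constructor
      · rintro ⟨hne, i, hi, h1, h2⟩
        have h1' : L.get ⟨i, by omega⟩ = a := h1
        have h2' : L.get ⟨i + 1, by omega⟩ = b := h2
        have key := List.isChain_iff_getElem.mp hchain' i (by omega)
        simp only [List.get_eq_getElem] at h1' h2'
        rwa [h1', h2'] at key
      · intro h
        obtain ⟨s, t, hst⟩ := hinf a b h
        clear_value L
        subst hst
        have hlen : s.length + 1 < (s ++ [a, b] ++ t).length := by
          simp
        refine ⟨fun he => hirr a (he ▸ h), s.length, hlen, ?_, ?_⟩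
        · have : ((s ++ [a, b]) ++ t)[s.length]'(by simp) = a := by
            rw [List.getElem_append_left (by simp : s.length < (s ++ [a, b]).length),
              List.getElem_append_right (le_refl s.length)]
            simp
          exact this
        · have : ((s ++ [a, b]) ++ t)[s.length + 1]'(by simp) = b := by
            rw [List.getElem_append_left (by simp : s.length + 1 < (s ++ [a, b]).length),
              List.getElem_append_right (by omega : s.length ≤ s.length + 1)]
            simp
          exact this
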